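/- Let r be a natural number and let A be a (2r)×(2r) matrix with integer entries. Then A is integrally null-cobordant if and only if A, regarded as a matrix over ℚ, is rationally null-cobordant. -/

import Mathlib

open Matrix

/-- A square matrix over a commutative ring is *null-cobordant* if its size is even,
say `n = 2 * r`, and it is congruent, via a matrix `P` with unit determinant, to a
block matrix whose upper-left `r × r` block is zero. -/
def Matrix.IsNullCobordant {R : Type*} [CommRing R] {n : ℕ}
    (A : Matrix (Fin n) (Fin n) R) : Prop :=
  ∃ r : ℕ, n = 2 * r ∧ ∃ P : Matrix (Fin n) (Fin n) R, IsUnit P.det ∧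
    ∀ i j : Fin n, (i : ℕ) < r → (j : ℕ) < r → (Pᵀ * A * P) i j = 0

/-- The block sum `A ⊞ B` of square matrices: the block-diagonal matrix `[[A,0],[0,B]]`. -/
def Matrix.blockSum {R : Type*} [CommRing R] {p q : ℕ}
    (A : Matrix (Fin p) (Fin p) R) (B : Matrix (Fin q) (Fin q) R) :
    Matrix (Fin (p + q)) (Fin (p + q)) R :=
  Matrix.reindex finSumFinEquiv finSumFinEquiv (Matrix.fromBlocks A 0 0 B)

noncomputable def intCastPi (n : ℕ) : (Fin n → ℤ) →ₗ[ℤ] (Fin n → ℚ) where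
  toFun x := fun k => (x k : ℚ)
  map_add' x y := by funext k; simp
  map_smul' c x := by
    funext k
    simp [Pi.smul_apply, smul_eq_mul, zsmul_eq_mul]

theorem intCastPi_injective (n : ℕ) : Function.Injective (intCastPi n) := by
  intro x y h
  funext k
  have := congrFun h k
  simpa [intCastPi] using this

theorem congr_entry {R : Type*} [CommRing R] {n : ℕ} (B P : Matrix (Fin n) (Fin n) R)
    (i j : Fin n) :
    (Pᵀ * B * P) i j = (fun k => P k i) ⬝ᵥ B.mulVec (fun k => P k j) := by
  simp only [Matrix.mul_apply, dotProduct, mulVec, transpose_apply, Finset.sum_mul,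
    Finset.mul_sum]
  rw [Finset.sum_comm]
  refine Finset.sum_congr rfl fun k _ => Finset.sum_congr rfl fun l _ => by ring

theorem cast_bilin {n : ℕ} (A : Matrix (Fin n) (Fin n) ℤ) (x y : Fin n → ℤ) :
    ((x ⬝ᵥ A.mulVec y : ℤ) : ℚ)
      = (intCastPi n x) ⬝ᵥ (A.map (Int.cast : ℤ → ℚ)).mulVec (intCastPi n y) := by
  simp only [dotProduct, mulVec, intCastPi, LinearMap.coe_mk, AddHom.coe_mk, Matrix.map_apply]
  push_cast
  rfl

private theorem aux_fwd (r : ℕ) (A : Matrix (Fin (2 * r)) (Fin (2 * r)) ℤ)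
    (h : A.IsNullCobordant) : (A.map (Int.cast : ℤ → ℚ)).IsNullCobordant := by
  obtain ⟨r', hn, P, hP, hz⟩ := h
  refine ⟨r', hn, P.map (Int.cast : ℤ → ℚ), ?_, ?_⟩
  · have : (P.map (Int.cast : ℤ → ℚ)).det = ((Int.castRingHom ℚ)) P.det :=
      ((Int.castRingHom ℚ).map_det P).symm
    rw [this]
    exact hP.map (Int.castRingHom ℚ).toMonoidHom
  · intro i j hi hj
    have h0 := hz i j hi hj
    have : (P.map (Int.cast : ℤ → ℚ))ᵀ * A.map (Int.cast : ℤ → ℚ) * P.map (Int.cast : ℤ → ℚ)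
        = (Pᵀ * A * P).map (Int.cast : ℤ → ℚ) := by
      rw [← Matrix.transpose_map]
      rw [show (A.map (Int.cast : ℤ → ℚ)) = A.map (Int.castRingHom ℚ) from rfl,
        show ((Pᵀ).map (Int.cast : ℤ → ℚ)) = (Pᵀ).map (Int.castRingHom ℚ) from rfl,
        show (P.map (Int.cast : ℤ → ℚ)) = P.map (Int.castRingHom ℚ) from rfl,
        ← Matrix.map_mul, ← Matrix.map_mul]
      rfl
    rw [this, Matrix.map_apply, h0, Int.cast_zero]


private theorem aux_bwd (r : ℕ) (A : Matrix (Fin (2 * r)) (Fin (2 * r)) ℤ)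
    (h : (A.map (Int.cast : ℤ → ℚ)).IsNullCobordant) : A.IsNullCobordant := by
  obtain ⟨r', hn, P, hP, hz⟩ := h
  have hr : r' = r := by omega
  set B := A.map (Int.cast : ℤ → ℚ) with hB
  -- the first r columns of P
  set v : Fin r → (Fin (2 * r) → ℚ) := fun i k => P k (Fin.castLE (by omega) i) with hv
  have hv_li : LinearIndependent ℚ v := by
    have h1 : LinearIndependent ℚ (fun i => Pᵀ i) :=
      linearIndependent_cols_iff_isUnit.mpr ((Matrix.isUnit_iff_isUnit_det P).mpr hP)
    exact h1.comp _ (Fin.castLE_injective _)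
  set V : Submodule ℚ (Fin (2 * r) → ℚ) := Submodule.span ℚ (Set.range v) with hV
  have hVrank : Module.finrank ℚ V = r := by
    rw [hV, finrank_span_eq_card hv_li, Fintype.card_fin]
  -- bilinear vanishing on V
  have hgen : ∀ i j : Fin r, v i ⬝ᵥ B.mulVec (v j) = 0 := by
    intro i j
    have := hz (Fin.castLE (by omega) i) (Fin.castLE (by omega) j)
      (by simp only [Fin.coe_castLE]; omega) (by simp only [Fin.coe_castLE]; omega)
    rw [congr_entry] at this
    exact this
  have hbil : ∀ x ∈ V, ∀ y ∈ V, x ⬝ᵥ B.mulVec y = 0 := by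
    intro x hx
    induction hx using Submodule.span_induction with
    | mem x hxm =>
      obtain ⟨i, rfl⟩ := hxm
      intro y hy
      induction hy using Submodule.span_induction with
      | mem y hym => obtain ⟨j, rfl⟩ := hym; exact hgen i j
      | zero => simp
      | add y z _ _ h1 h2 => simp [mulVec_add, dotProduct_add, h1, h2]
      | smul c y _ h1 => simp [mulVec_smul, dotProduct_smul, h1]
    | zero => intro y hy; simp
    | add x z _ _ h1 h2 => intro y hy; simp [add_dotProduct, h1 y hy, h2 y hy]
    | smul c x _ h1 => intro y hy; simp [smul_dotProduct, h1 y hy]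
  clear hz hP
  set ι := intCastPi (2 * r) with hι
  set N : Submodule ℤ (Fin (2 * r) → ℤ) := (V.restrictScalars ℤ).comap ι with hN
  -- the quotient by N is torsion-free, hence free, hence projective
  have hker : LinearMap.ker ((V.mkQ).restrictScalars ℤ ∘ₗ ι) = N := by
    ext x
    simp [hN, Submodule.mem_comap, LinearMap.mem_ker, Submodule.Quotient.mk_eq_zero]
  have hqinj : Function.Injective (N.liftQ ((V.mkQ).restrictScalars ℤ ∘ₗ ι) hker.symm.le) := by
    rw [← LinearMap.ker_eq_bot, Submodule.ker_liftQ_eq_bot']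
    exact hker.symm
  have htf : NoZeroSMulDivisors ℤ ((Fin (2 * r) → ℤ) ⧸ N) := by
    constructor
    intro c x hcx
    rcases eq_or_ne c 0 with hc | hc
    · exact Or.inl hc
    · refine Or.inr ?_
      apply hqinj
      have : c • (N.liftQ ((V.mkQ).restrictScalars ℤ ∘ₗ ι) hker.symm.le) x = 0 := by
        rw [← LinearMap.map_smul, hcx, map_zero]
      have hTF : IsAddTorsionFree ((Fin (2 * r) → ℚ) ⧸ V) := IsAddTorsionFree.of_module_rat _
      rcases smul_eq_zero.mp this with h' | h'
      · exact absurd h' hc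
      · rw [h', map_zero]
  have : Module.Projective ℤ ((Fin (2 * r) → ℤ) ⧸ N) := Module.Projective.of_free
  obtain ⟨s, hs⟩ := Module.projective_lifting_property N.mkQ LinearMap.id
    N.mkQ_surjective
  -- the complement
  set C : Submodule ℤ (Fin (2 * r) → ℤ) := LinearMap.range s with hC
  have hcompl : IsCompl N C := by
    constructor
    · rw [disjoint_iff_inf_le]
      rintro x ⟨hxN, q, rfl⟩
      have : N.mkQ (s q) = q := congrFun (congrArg (·.toFun) hs) q
      have hq0 : q = 0 := by
        rw [← this]
        exact (Submodule.Quotient.mk_eq_zero N).mpr hxN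
      rw [hq0, map_zero]
      exact Submodule.zero_mem ⊥
    · rw [codisjoint_iff, eq_top_iff]
      intro x _
      have hx1 : x - s (N.mkQ x) ∈ N := by
        have hmk : N.mkQ (s (N.mkQ x)) = N.mkQ x := congrFun (congrArg (·.toFun) hs) (N.mkQ x)
        have h2 : N.mkQ (x - s (N.mkQ x)) = 0 := by rw [map_sub, hmk, sub_self]
        rwa [← LinearMap.mem_ker, Submodule.ker_mkQ] at h2
      exact Submodule.mem_sup.mpr ⟨x - s (N.mkQ x), hx1, s (N.mkQ x),
        ⟨N.mkQ x, rfl⟩, by ring⟩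
  -- N is finite free
  have hNfin : Module.Finite ℤ N := Module.Finite.iff_fg.mpr (IsNoetherian.noetherian N)
  have hCfin : Module.Finite ℤ C := Module.Finite.iff_fg.mpr (IsNoetherian.noetherian C)
  set m := Module.finrank ℤ N with hm
  set mc := Module.finrank ℤ C with hmc
  set bN : Module.Basis (Fin m) ℤ N := Module.finBasis ℤ N with hbN
  set bC : Module.Basis (Fin mc) ℤ C := Module.finBasis ℤ C with hbC
  -- the images of bN in ℚ^n
  set u : Fin m → (Fin (2 * r) → ℚ) := fun k => ι (bN k : Fin (2 * r) → ℤ) with hu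
  have hu_liZ : LinearIndependent ℤ u := by
    have : u = (ι ∘ₗ N.subtype) ∘ bN := rfl
    rw [this]
    apply bN.linearIndependent.map' (ι ∘ₗ N.subtype)
    rw [LinearMap.ker_eq_bot]
    exact (intCastPi_injective (2 * r)).comp N.injective_subtype
  have hu_li : LinearIndependent ℚ u := (LinearIndependent.iff_fractionRing ℤ ℚ).mp hu_liZ
  have hu_mem : ∀ k, u k ∈ V := fun k => (bN k).2
  -- m ≤ r
  have hmr : m ≤ r := by
    have h1 : Submodule.span ℚ (Set.range u) ≤ V := Submodule.span_le.mpr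
      (Set.range_subset_iff.mpr hu_mem)
    have h2 : Module.finrank ℚ (Submodule.span ℚ (Set.range u)) = m := by
      rw [finrank_span_eq_card hu_li, Fintype.card_fin]
    calc m = Module.finrank ℚ (Submodule.span ℚ (Set.range u)) := h2.symm
      _ ≤ Module.finrank ℚ V := Submodule.finrank_mono h1
      _ = r := hVrank
  -- r ≤ m : clear denominators of the columns v
  obtain ⟨d, hd⟩ := IsLocalization.exist_integer_multiples_of_finite
    (nonZeroDivisors ℤ) (fun p : Fin r × Fin (2 * r) => v p.1 p.2)
  choose w hw using fun p : Fin r × Fin (2 * r) => hd p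
  set W : Fin r → (Fin (2 * r) → ℤ) := fun i k => w (i, k) with hW
  have hdne : (d : ℤ) ≠ 0 := nonZeroDivisors.coe_ne_zero d
  have hιW : ∀ i, ι (W i) = ((d : ℤ) : ℚ) • v i := by
    intro i
    funext k
    have := hw (i, k)
    simp only [Algebra.algebraMap_self, map_intCast, eq_intCast] at this
    simp only [hι, intCastPi, LinearMap.coe_mk, AddHom.coe_mk, hW]
    rw [this]
    simp [zsmul_eq_mul]
  have hWmem : ∀ i, W i ∈ N := by
    intro i
    simp only [hN, Submodule.mem_comap, Submodule.restrictScalars_mem]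
    rw [hιW i]
    exact V.smul_mem _ (Submodule.subset_span ⟨i, rfl⟩)
  have hrm : r ≤ m := by
    -- the scaled columns are independent and lie in span of u
    set v' : Fin r → (Fin (2 * r) → ℚ) := fun i => ι (W i) with hv'
    have hv'_li : LinearIndependent ℚ v' := by
      have : v' = fun i => (Units.mk0 (((d : ℤ) : ℚ)) (by exact_mod_cast hdne) : ℚˣ) • v i := by
        funext i; rw [hv']; simp [hιW i, Units.smul_def]
      rw [this]
      exact hv_li.units_smul _
    have hNspan : Submodule.span ℤ (Set.range (fun k => (bN k : Fin (2 * r) → ℤ))) = N := by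
      have h1 : Set.range (fun k => (bN k : Fin (2 * r) → ℤ)) = N.subtype '' Set.range bN := by
        rw [← Set.range_comp]; rfl
      rw [h1, ← Submodule.map_span, bN.span_eq, Submodule.map_subtype_top]
    have hv'_mem : ∀ i, v' i ∈ Submodule.span ℚ (Set.range u) := by
      intro i
      have hWi : W i ∈ Submodule.span ℤ (Set.range (fun k => (bN k : Fin (2 * r) → ℤ))) := by
        rw [hNspan]; exact hWmem i
      have h2 : ι (W i) ∈ Submodule.map ι
          (Submodule.span ℤ (Set.range (fun k => (bN k : Fin (2 * r) → ℤ)))) :=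
        Submodule.mem_map_of_mem hWi
      rw [Submodule.map_span, ← Set.range_comp] at h2
      have h3 : Submodule.span ℤ (Set.range (⇑ι ∘ fun k => (bN k : Fin (2 * r) → ℤ)))
          ≤ Submodule.restrictScalars ℤ (Submodule.span ℚ (Set.range u)) := by
        apply Submodule.span_le.mpr
        intro x hx
        obtain ⟨k, rfl⟩ := hx
        exact Submodule.subset_span ⟨k, rfl⟩
      exact h3 h2
    have h2 : Module.finrank ℚ (Submodule.span ℚ (Set.range v')) = r := by
      rw [finrank_span_eq_card hv'_li, Fintype.card_fin]
    calc r = Module.finrank ℚ (Submodule.span ℚ (Set.range v')) := h2.symm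
      _ ≤ Module.finrank ℚ (Submodule.span ℚ (Set.range u)) :=
          Submodule.finrank_mono (Submodule.span_le.mpr (Set.range_subset_iff.mpr hv'_mem))
      _ ≤ m := by
          have := finrank_span_le_card (R := ℚ) (Set.range u)
          calc Module.finrank ℚ (Submodule.span ℚ (Set.range u)) ≤ _ := this
            _ ≤ m := by
              rw [Set.toFinset_range]
              exact (Finset.card_image_le).trans (by simp)
  have hmr' : m = r := le_antisymm hmr hrm
  -- assemble a basis of ℤ^(2r) whose first r vectors lie in N
  set bN' : Module.Basis (Fin r) ℤ N := bN.reindex (finCongr hmr') with hbN'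
  set bFull : Module.Basis (Fin r ⊕ Fin mc) ℤ (Fin (2 * r) → ℤ) :=
    (bN'.prod bC).map (Submodule.prodEquivOfIsCompl N C hcompl) with hbFull
  have hcard : r + mc = 2 * r := by
    have h1 : Module.finrank ℤ (Fin (2 * r) → ℤ) = 2 * r := by
      rw [Module.finrank_pi, Fintype.card_fin]
    have h2 : Module.finrank ℤ (Fin (2 * r) → ℤ) = r + mc := by
      rw [Module.finrank_eq_card_basis bFull, Fintype.card_sum, Fintype.card_fin,
        Fintype.card_fin]
    omega
  have hmc' : mc = r := by omega
  set e : (Fin r ⊕ Fin mc) ≃ Fin (2 * r) :=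
    (Equiv.sumCongr (Equiv.refl (Fin r)) (finCongr hmc')).trans
      (finSumFinEquiv.trans (finCongr (by omega))) with he
  set b : Module.Basis (Fin (2 * r)) ℤ (Fin (2 * r) → ℤ) := bFull.reindex e with hb
  have hbmem : ∀ i : Fin (2 * r), (i : ℕ) < r → b i ∈ N := by
    intro i hi
    rw [hb, Module.Basis.reindex_apply]
    rcases hse : e.symm i with j | j
    · rw [hbFull, Module.Basis.map_apply, Module.Basis.prod_apply]
      simp only [Sum.elim_inl, LinearMap.coe_inl, Function.comp_apply,
        Submodule.coe_prodEquivOfIsCompl']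
      simpa using (bN' j).2
    · exfalso
      have : i = e (Sum.inr j) := by rw [← hse, Equiv.apply_symm_apply]
      have hcoe : (i : ℕ) = r + (j : ℕ) := by
        rw [this, he]
        simp [finSumFinEquiv_apply_right, Fin.coe_castAdd, Fin.coe_natAdd]
        omega
      omega
  -- the change of basis matrix
  set Pb : Matrix (Fin (2 * r)) (Fin (2 * r)) ℤ :=
    (Pi.basisFun ℤ (Fin (2 * r))).toMatrix ⇑b with hPb
  refine ⟨r, rfl, Pb, ?_, ?_⟩
  · have h1 := Module.Basis.toMatrix_mul_toMatrix_flip (Pi.basisFun ℤ (Fin (2 * r))) b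
    have h2 := congrArg Matrix.det h1
    rw [Matrix.det_mul, Matrix.det_one] at h2
    exact IsUnit.of_mul_eq_one _ h2
  · intro i j hi hj
    have hcol : ∀ (l : Fin (2 * r)), (fun k => Pb k l) = b l := by
      intro l
      funext k
      rw [hPb, Module.Basis.toMatrix_apply, Pi.basisFun_repr]
    rw [congr_entry, hcol i, hcol j]
    have hmemi : ι (b i) ∈ V := hbmem i hi
    have hmemj : ι (b j) ∈ V := hbmem j hj
    have := hbil _ hmemi _ hmemj
    have hcast : ((b i ⬝ᵥ A.mulVec (b j) : ℤ) : ℚ) = 0 := by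
      rw [cast_bilin, ← hι, ← hB]
      exact this
    exact_mod_cast hcast


/-- An integer matrix of even size is integrally null-cobordant if and only if it is
rationally null-cobordant (as a matrix over `ℚ`). -/
theorem int_nullCobordant_iff_rat_nullCobordant (r : ℕ)
    (A : Matrix (Fin (2 * r)) (Fin (2 * r)) ℤ) :
    A.IsNullCobordant ↔ (A.map (Int.cast : ℤ → ℚ)).IsNullCobordant :=
  ⟨aux_fwd r A, aux_bwd r A⟩
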